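/- Let p : X̃ → X be a covering map, where X̃ is a connected topological space and X is a locally connected topological space whose topology is induced by a metric d. Then there exists a metric ρ on X̃ inducing the topology of X̃ such that p is locally isometric: every point of X̃ has an open neighbourhood U such that d(p(a), p(b)) = ρ(a,b) for all a, b ∈ U. -/

import Mathlib

open Metric Set

namespace StmtAux

variable {E X : Type*} [TopologicalSpace E] [MetricSpace X]

/-- `f` is a continuous section of `p` over `D` whose image is clopen in `p ⁻¹' D`. -/
def Sec (p : E → X) (D : Set X) (f : X → E) : Prop :=
  ContinuousOn f D ∧ (∀ z ∈ D, p (f z) = z) ∧ IsOpen (f '' D) ∧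
    IsOpen ((p ⁻¹' D) \ (f '' D))

/-- `D` is evenly covered: open, and every point of `p ⁻¹' D` lies on a good section. -/
def EC (p : E → X) (D : Set X) : Prop :=
  IsOpen D ∧ ∀ x : E, p x ∈ D → ∃ f : X → E, Sec p D f ∧ f (p x) = x

/-- radius of even-coverability at `y`, capped at 1 -/
noncomputable def rad (p : E → X) (y : X) : ℝ :=
  sSup {t : ℝ | 0 < t ∧ t ≤ 1 ∧ ∃ D : Set X, EC p D ∧ ball y t ⊆ D}

variable {p : E → X}

lemma sec_image_inter {D : Set X} {f : X → E} (hf : Sec p D f) {S : Set X} (hS : S ⊆ D) :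
    f '' S = (f '' D) ∩ p ⁻¹' S := by
  ext w
  constructor
  · rintro ⟨z, hz, rfl⟩
    refine ⟨⟨z, hS hz, rfl⟩, ?_⟩
    have := hf.2.1 z (hS hz)
    simp [mem_preimage, this, hz]
  · rintro ⟨⟨z, hzD, rfl⟩, hw⟩
    have hz : p (f z) = z := hf.2.1 z hzD
    rw [mem_preimage, hz] at hw
    exact ⟨z, hw, rfl⟩

lemma exists_ec (hp : IsCoveringMap p) (y : X) :
    ∃ Db : Set X, IsOpen Db ∧ y ∈ Db ∧ ∀ D : Set X, IsOpen D → D ⊆ Db → EC p D := by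
  haveI := (hp y).1
  rcases isEmpty_or_nonempty (p ⁻¹' {y}) with hemp | hne
  · obtain ⟨_, U, hyU, hUo, _, H, _⟩ := hp y
    refine ⟨U, hUo, hyU, fun D hDo hDU => ⟨hDo, fun x hx => ?_⟩⟩
    exact isEmptyElim (H ⟨x, hDU hx⟩).2
  set T := (hp y).toTrivialization with hT
  refine ⟨T.baseSet, T.open_baseSet, (hp y).mem_toTrivialization_baseSet, ?_⟩
  intro D hDo hDb
  refine ⟨hDo, ?_⟩
  intro x hx
  have hxs : x ∈ T.source := T.mem_source.2 (hDb hx)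
  set i := (T x).2 with hi
  set f : X → E := fun z => T.toOpenPartialHomeomorph.symm (z, i) with hf
  have htar : ∀ z ∈ D, ((z, i) : X × (p ⁻¹' {y})) ∈ T.target := fun z hz =>
    T.mem_target.2 (hDb hz)
  have hpf : ∀ z ∈ D, p (f z) = z := fun z hz => T.proj_symm_apply (htar z hz)
  have happ : ∀ z ∈ D, T (f z) = (z, i) := fun z hz => T.apply_symm_apply (htar z hz)
  have hsrc : ∀ z ∈ D, f z ∈ T.source := fun z hz => T.map_target (htar z hz)
  have hTc : ContinuousOn (fun w => T w) T.source := by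
    have h := T.toOpenPartialHomeomorph.continuousOn
    rwa [T.coe_coe] at h
  have hsnd : ContinuousOn (fun w => (T w).2) T.source := hTc.snd
  have himg : f '' D = (p ⁻¹' D) ∩ (T.source ∩ (fun w => (T w).2) ⁻¹' {i}) := by
    ext w
    constructor
    · rintro ⟨z, hz, rfl⟩
      refine ⟨by simp [mem_preimage, hpf z hz, hz], hsrc z hz, ?_⟩
      simp [mem_preimage, happ z hz]
    · rintro ⟨hw1, hw2, hw3⟩
      rw [mem_preimage, mem_singleton_iff] at hw3
      have hTw : T w = (p w, i) := Prod.ext (T.coe_fst hw2) hw3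
      have : T.toOpenPartialHomeomorph.symm (T w) = w := T.toOpenPartialHomeomorph.left_inv hw2
      rw [hTw] at this
      exact ⟨p w, hw1, this⟩
  have hio : IsOpen (T.source ∩ (fun w => (T w).2) ⁻¹' {i}) :=
    hsnd.isOpen_inter_preimage T.open_source (isOpen_discrete _)
  have hpd : IsOpen (p ⁻¹' D) := hDo.preimage hp.continuous
  have hcompl : (p ⁻¹' D) \ (f '' D) =
      (p ⁻¹' D) ∩ (T.source ∩ (fun w => (T w).2) ⁻¹' ({i}ᶜ)) := by
    ext w
    constructor
    · rintro ⟨hw1, hw2⟩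
      have hws : w ∈ T.source := T.mem_source.2 (hDb hw1)
      refine ⟨hw1, hws, ?_⟩
      rw [mem_preimage, mem_compl_iff, mem_singleton_iff]
      intro hww
      exact hw2 (by rw [himg]; exact ⟨hw1, hws, by simpa using hww⟩)
    · rintro ⟨hw1, hw2, hw3⟩
      rw [mem_preimage, mem_compl_iff, mem_singleton_iff] at hw3
      refine ⟨hw1, fun hmem => ?_⟩
      rw [himg] at hmem
      exact hw3 hmem.2.2
  refine ⟨f, ⟨?_, hpf, ?_, ?_⟩, ?_⟩
  · -- continuity
    have : ContinuousOn T.toOpenPartialHomeomorph.symm T.target :=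
      T.toOpenPartialHomeomorph.continuousOn_symm
    exact this.comp (Continuous.continuousOn (by fun_prop)) (fun z hz => htar z hz)
  · rw [himg]; exact hpd.inter hio
  · rw [hcompl]
    exact hpd.inter (hsnd.isOpen_inter_preimage T.open_source (isOpen_discrete _))
  · -- f (p x) = x
    have hTx : T x = (p x, i) := Prod.ext (T.coe_fst hxs) rfl
    have : T.toOpenPartialHomeomorph.symm (T x) = x := T.toOpenPartialHomeomorph.left_inv hxs
    rw [hTx] at this
    exact this

lemma rad_bddAbove (y : X) :
    BddAbove {t : ℝ | 0 < t ∧ t ≤ 1 ∧ ∃ D : Set X, EC p D ∧ ball y t ⊆ D} :=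
  ⟨1, fun _ ht => ht.2.1⟩

lemma rad_pos (hp : IsCoveringMap p) (y : X) : 0 < rad p y := by
  obtain ⟨Db, hDo, hyD, hec⟩ := exists_ec hp y
  obtain ⟨s, hs, hball⟩ := Metric.isOpen_iff.1 hDo y hyD
  have hmem : min s 1 ∈ {t : ℝ | 0 < t ∧ t ≤ 1 ∧ ∃ D : Set X, EC p D ∧ ball y t ⊆ D} := by
    refine ⟨lt_min hs one_pos, min_le_right _ _, Db, hec Db hDo subset_rfl, ?_⟩
    exact fun w hw => hball (mem_of_mem_of_subset hw (ball_subset_ball (min_le_left _ _)))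
  calc (0:ℝ) < min s 1 := lt_min hs one_pos
    _ ≤ rad p y := le_csSup (rad_bddAbove y) hmem

lemma rad_le_one (hp : IsCoveringMap p) (y : X) : rad p y ≤ 1 := by
  apply csSup_le
  · obtain ⟨Db, hDo, hyD, hec⟩ := exists_ec hp y
    obtain ⟨s, hs, hball⟩ := Metric.isOpen_iff.1 hDo y hyD
    exact ⟨min s 1, lt_min hs one_pos, min_le_right _ _, Db, hec Db hDo subset_rfl,
      fun w hw => hball (mem_of_mem_of_subset hw (ball_subset_ball (min_le_left _ _)))⟩
  · exact fun t ht => ht.2.1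

lemma rad_set_nonempty (hp : IsCoveringMap p) (y : X) :
    Set.Nonempty {t : ℝ | 0 < t ∧ t ≤ 1 ∧ ∃ D : Set X, EC p D ∧ ball y t ⊆ D} := by
  obtain ⟨Db, hDo, hyD, hec⟩ := exists_ec hp y
  obtain ⟨s, hs, hball⟩ := Metric.isOpen_iff.1 hDo y hyD
  exact ⟨min s 1, lt_min hs one_pos, min_le_right _ _, Db, hec Db hDo subset_rfl,
    fun w hw => hball (mem_of_mem_of_subset hw (ball_subset_ball (min_le_left _ _)))⟩

lemma exists_ec_ball (hp : IsCoveringMap p) {y : X} {s : ℝ} (hs : s < rad p y) :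
    ∃ D : Set X, EC p D ∧ ball y s ⊆ D := by
  obtain ⟨t, ht, hts⟩ := exists_lt_of_lt_csSup (rad_set_nonempty hp y) hs
  obtain ⟨_, _, D, hD, hball⟩ := ht
  exact ⟨D, hD, fun w hw => hball (ball_subset_ball hts.le hw)⟩

lemma rad_lip (hp : IsCoveringMap p) (y y' : X) :
    rad p y - dist y y' ≤ rad p y' := by
  by_contra hcon
  push_neg at hcon
  have h0 : 0 < rad p y' := rad_pos hp y'
  set t := (rad p y' + (rad p y - dist y y')) / 2 with hts
  have ht1 : rad p y' < t := by simp only [hts]; linarith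
  have ht2 : t < rad p y - dist y y' := by simp only [hts]; linarith
  have htpos : 0 < t := lt_trans h0 ht1
  -- show t is in the set for y'
  have h3 : t + dist y y' < rad p y := by linarith
  obtain ⟨D, hD, hball⟩ := exists_ec_ball hp h3
  have hmem : t ∈ {u : ℝ | 0 < u ∧ u ≤ 1 ∧ ∃ D : Set X, EC p D ∧ ball y' u ⊆ D} := by
    refine ⟨htpos, ?_, D, hD, ?_⟩
    · have := rad_le_one hp y
      have hd : (0:ℝ) ≤ dist y y' := dist_nonneg
      linarith
    · intro w hw
      apply hball
      rw [mem_ball] at hw ⊢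
      calc dist w y ≤ dist w y' + dist y' y := dist_triangle _ _ _
        _ < t + dist y y' := by rw [dist_comm y' y]; linarith
  have : t ≤ rad p y' := le_csSup (rad_bddAbove y') hmem
  linarith

/-- the step relation -/
def Step (p : E → X) (x x' : E) : Prop :=
  ∃ (D : Set X) (f : X → E), Sec p D f ∧ p x ∈ D ∧ p x' ∈ D ∧
    f (p x) = x ∧ f (p x') = x' ∧
    ball (p x) (rad p (p x) / 4) ⊆ D ∧ ball (p x') (rad p (p x') / 4) ⊆ D

lemma step_symm {x x' : E} (h : Step p x x') : Step p x' x := by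
  obtain ⟨D, f, h1, h2, h3, h4, h5, h6, h7⟩ := h
  exact ⟨D, f, h1, h3, h2, h5, h4, h7, h6⟩

/-- around every point there is an open set all of whose pairs are steps -/
lemma exists_good_nhd (hp : IsCoveringMap p) (e : E) :
    ∃ O : Set E, IsOpen O ∧ e ∈ O ∧ ∀ x ∈ O, ∀ x' ∈ O, Step p x x' := by
  set y := p e with hy
  set r0 := rad p y with hr0
  have hr0pos : 0 < r0 := rad_pos hp y
  obtain ⟨D, hD, hball⟩ := exists_ec_ball hp (show (3/4) * r0 < rad p y by
    rw [← hr0]; linarith)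
  have hyD : y ∈ D := hball (mem_ball_self (by linarith))
  obtain ⟨f, hSec, hfe⟩ := hD.2 e hyD
  have hsub : ball y (r0 / 100) ⊆ D := fun w hw =>
    hball (ball_subset_ball (by linarith) hw)
  refine ⟨f '' (ball y (r0 / 100)), ?_, ?_, ?_⟩
  · rw [sec_image_inter hSec hsub]
    exact hSec.2.2.1.inter (isOpen_ball.preimage hp.continuous)
  · exact ⟨y, mem_ball_self (by linarith), hfe⟩
  · -- all pairs in O are steps
    have key : ∀ x ∈ f '' (ball y (r0 / 100)), p x ∈ ball y (r0 / 100) ∧ f (p x) = x ∧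
        ball (p x) (rad p (p x) / 4) ⊆ D := by
      rintro x ⟨z, hz, rfl⟩
      have hpz : p (f z) = z := hSec.2.1 z (hsub hz)
      refine ⟨by rwa [hpz], by rw [hpz], ?_⟩
      rw [hpz]
      intro w hw
      apply hball
      rw [mem_ball] at hw hz ⊢
      have hzle : rad p z ≤ r0 + dist z y := by
        have h := rad_lip hp z y
        rw [hr0]
        linarith
      calc dist w y ≤ dist w z + dist z y := dist_triangle _ _ _
        _ < rad p z / 4 + r0 / 100 := by linarith
        _ ≤ (r0 + r0 / 100) / 4 + r0 / 100 := by
            have hd0 : dist z y < r0 / 100 := hz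
            linarith
        _ ≤ (3/4) * r0 := by linarith
    intro x hx x' hx'
    obtain ⟨hx1, hx2, hx3⟩ := key x hx
    obtain ⟨hx1', hx2', hx3'⟩ := key x' hx'
    exact ⟨D, f, hSec, hsub hx1, hsub hx1', hx2, hx2', hx3, hx3'⟩

/-- chains -/
def ChainTo (p : E → X) (a b : E) (n : ℕ) (c : ℕ → E) : Prop :=
  c 0 = a ∧ c n = b ∧ ∀ i < n, Step p (c i) (c (i + 1))

noncomputable def chainCost (p : E → X) (c : ℕ → E) (n : ℕ) : ℝ :=
  ∑ i ∈ Finset.range n, dist (p (c i)) (p (c (i + 1)))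

def CS (p : E → X) (a b : E) : Set ℝ :=
  {L | ∃ n c, ChainTo p a b n c ∧ chainCost p c n = L}

lemma chainCost_nonneg (c : ℕ → E) (n : ℕ) : 0 ≤ chainCost p c n :=
  Finset.sum_nonneg fun _ _ => dist_nonneg

lemma cs_bddBelow (a b : E) : BddBelow (CS p a b) := by
  refine ⟨0, ?_⟩
  rintro L ⟨n, c, _, rfl⟩
  exact chainCost_nonneg c n

lemma cs_self (a : E) : (0:ℝ) ∈ CS p a a :=
  ⟨0, fun _ => a, ⟨rfl, rfl, fun i hi => absurd hi (Nat.not_lt_zero i)⟩, by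
    simp [chainCost]⟩

lemma dist_le_chainCost {a b : E} {n : ℕ} {c : ℕ → E} (h : ChainTo p a b n c) :
    dist (p a) (p b) ≤ chainCost p c n := by
  obtain ⟨h0, hn, -⟩ := h
  rw [← h0, ← hn]
  clear h0 hn
  induction n with
  | zero => simp [chainCost]
  | succ m ih =>
    rw [chainCost, Finset.sum_range_succ]
    calc dist (p (c 0)) (p (c (m+1)))
        ≤ dist (p (c 0)) (p (c m)) + dist (p (c m)) (p (c (m+1))) := dist_triangle _ _ _
      _ ≤ _ := add_le_add_left ih _

lemma cs_single {a b : E} (h : Step p a b) : dist (p a) (p b) ∈ CS p a b := by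
  refine ⟨1, fun j => if j = 0 then a else b, ⟨by simp, by simp, ?_⟩, ?_⟩
  · intro i hi
    interval_cases i
    simpa using h
  · simp [chainCost]

lemma cs_snoc {a b x : E} {L : ℝ} (h : L ∈ CS p a b) (hs : Step p b x) :
    L + dist (p b) (p x) ∈ CS p a x := by
  obtain ⟨n, c, ⟨h0, hn, hstep⟩, rfl⟩ := h
  refine ⟨n + 1, fun i => if i ≤ n then c i else x, ⟨by simp [h0], by simp, ?_⟩, ?_⟩
  · intro i hi
    rcases Nat.lt_or_ge i n with hin | hin
    · have e1 : i ≤ n := hin.le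
      have e2 : i + 1 ≤ n := hin
      simpa [e1, e2] using hstep i hin
    · have : i = n := by omega
      subst this
      have e1 : i ≤ i := le_refl i
      have e2 : ¬ (i + 1 ≤ i) := by omega
      simpa [e1, e2, hn] using hs
  · rw [chainCost, Finset.sum_range_succ]
    have e2 : ¬ (n + 1 ≤ n) := by omega
    have hterm : ∀ i ∈ Finset.range n,
        dist (p (if i ≤ n then c i else x)) (p (if i + 1 ≤ n then c (i+1) else x)) =
          dist (p (c i)) (p (c (i+1))) := by
      intro i hi
      rw [Finset.mem_range] at hi
      have e3 : i ≤ n := hi.le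
      have e4 : i + 1 ≤ n := hi
      simp [e3, e4]
    rw [Finset.sum_congr rfl hterm]
    simp [e2, hn, chainCost]

lemma cs_extend {a : E} {L₁ : ℝ} :
    ∀ (m : ℕ) (c : ℕ → E), (∀ i < m, Step p (c i) (c (i+1))) →
      L₁ ∈ CS p a (c 0) → L₁ + chainCost p c m ∈ CS p a (c m) := by
  intro m
  induction m with
  | zero =>
    intro c _ h₁
    have : chainCost p c 0 = 0 := by simp [chainCost]
    rw [this, add_zero]
    exact h₁
  | succ k ih =>
    intro c hstep h₁
    have ihm : L₁ + chainCost p c k ∈ CS p a (c k) :=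
      ih c (fun i hi => hstep i (by omega)) h₁
    have h3 : Step p (c k) (c (k+1)) := hstep k (by omega)
    have hres := cs_snoc ihm h3
    have hcost : chainCost p c (k+1) = chainCost p c k + dist (p (c k)) (p (c (k+1))) := by
      rw [chainCost, Finset.sum_range_succ]; rfl
    rw [hcost, ← add_assoc]
    exact hres

lemma cs_add {a b x : E} {L₁ L₂ : ℝ} (h₁ : L₁ ∈ CS p a b) (h₂ : L₂ ∈ CS p b x) :
    L₁ + L₂ ∈ CS p a x := by
  obtain ⟨m, c, ⟨h0, hm, hstep⟩, rfl⟩ := h₂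
  have := cs_extend m c hstep (by rwa [h0])
  rwa [hm] at this

lemma cs_rev {a b : E} {L : ℝ} (h : L ∈ CS p a b) : L ∈ CS p b a := by
  obtain ⟨n, c, ⟨h0, hn, hstep⟩, rfl⟩ := h
  refine ⟨n, fun i => c (n - i), ⟨by simp [hn], by simp [h0], ?_⟩, ?_⟩
  · intro i hi
    show Step p (c (n - i)) (c (n - (i+1)))
    have e1 : n - i = (n - (i+1)) + 1 := by omega
    rw [e1]
    exact step_symm (hstep (n - (i+1)) (by omega))
  · rw [chainCost, chainCost]
    have hterm : ∀ i ∈ Finset.range n,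
        dist (p (c (n - i))) (p (c (n - (i+1)))) =
          dist (p (c ((n - 1 - i)))) (p (c ((n - 1 - i) + 1))) := by
      intro i hi
      rw [Finset.mem_range] at hi
      have e1 : n - i = (n - 1 - i) + 1 := by omega
      have e2 : n - (i+1) = n - 1 - i := by omega
      rw [e1, e2, dist_comm]
    rw [Finset.sum_congr rfl hterm,
      Finset.sum_range_reflect (fun i => dist (p (c i)) (p (c (i+1)))) n]

lemma cs_nonempty (hp : IsCoveringMap p) [ConnectedSpace E] (a b : E) :
    (CS p a b).Nonempty := by
  set R := {x : E | (CS p a x).Nonempty} with hR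
  have hopen : IsOpen R := by
    rw [isOpen_iff_forall_mem_open]
    intro x hx
    obtain ⟨O, hO, hxO, hOstep⟩ := exists_good_nhd hp x
    refine ⟨O, ?_, hO, hxO⟩
    intro w hw
    obtain ⟨L, hL⟩ := hx
    exact ⟨L + dist (p x) (p w), cs_snoc hL (hOstep x hxO w hw)⟩
  have hclosed : IsClosed R := by
    rw [← isOpen_compl_iff, isOpen_iff_forall_mem_open]
    intro x hx
    obtain ⟨O, hO, hxO, hOstep⟩ := exists_good_nhd hp x
    refine ⟨O, ?_, hO, hxO⟩
    intro w hw hwR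
    apply hx
    obtain ⟨L, hL⟩ := hwR
    exact ⟨L + dist (p w) (p x), cs_snoc hL (hOstep w hw x hxO)⟩
  have hne : R.Nonempty := ⟨a, 0, cs_self a⟩
  have : R = Set.univ := IsClopen.eq_univ ⟨hclosed, hopen⟩ hne
  have hb : b ∈ R := by rw [this]; trivial
  exact hb

/-- the candidate metric -/
noncomputable def rho (p : E → X) (a b : E) : ℝ := sInf (CS p a b)

lemma rho_nonneg (hp : IsCoveringMap p) [ConnectedSpace E] (a b : E) : 0 ≤ rho p a b :=
  le_csInf (cs_nonempty hp a b) (by rintro L ⟨n, c, _, rfl⟩; exact chainCost_nonneg c n)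

lemma dist_le_rho (hp : IsCoveringMap p) [ConnectedSpace E] (a b : E) :
    dist (p a) (p b) ≤ rho p a b :=
  le_csInf (cs_nonempty hp a b) (by rintro L ⟨n, c, hc, rfl⟩; exact dist_le_chainCost hc)

lemma rho_le_of_step {a b : E} (h : Step p a b) : rho p a b ≤ dist (p a) (p b) :=
  csInf_le (cs_bddBelow a b) (cs_single h)

lemma rho_self (hp : IsCoveringMap p) [ConnectedSpace E] (a : E) : rho p a a = 0 :=
  le_antisymm (csInf_le (cs_bddBelow a a) (cs_self a)) (rho_nonneg hp a a)

lemma rho_symm (hp : IsCoveringMap p) [ConnectedSpace E] (a b : E) :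
    rho p a b = rho p b a := by
  unfold rho
  congr 1
  ext L
  exact ⟨cs_rev, cs_rev⟩

lemma rho_triangle (hp : IsCoveringMap p) [ConnectedSpace E] (a b c : E) :
    rho p a c ≤ rho p a b + rho p b c := by
  apply le_of_forall_pos_le_add
  intro ε hε
  obtain ⟨L₁, hL₁, hlt₁⟩ := exists_lt_of_csInf_lt (cs_nonempty hp a b)
    (show rho p a b < rho p a b + ε/2 by linarith)
  obtain ⟨L₂, hL₂, hlt₂⟩ := exists_lt_of_csInf_lt (cs_nonempty hp b c)
    (show rho p b c < rho p b c + ε/2 by linarith)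
  have hmem := cs_add hL₁ hL₂
  have h1 : rho p a c ≤ L₁ + L₂ := csInf_le (cs_bddBelow a c) hmem
  linarith

/-- The key stability lemma: cheap chains starting at `a` stay on the section `f₀`. -/
lemma stay {a : E} {D₀ : Set X} {f₀ : X → E} (hS : Sec p D₀ f₀)
    (hfa : f₀ (p a) = a) {t θ : ℝ} (hθ : 0 < θ) (hθt : θ ≤ t)
    (hball : ball (p a) (4 * t) ⊆ D₀)
    {B : Set X} (hBc : IsPreconnected B)
    (hBsub : B ⊆ ball (p a) t) (hθB : ball (p a) θ ⊆ B)
    (hr8 : ∀ z ∈ ball (p a) θ, 8 * t ≤ rad p z)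
    {n : ℕ} {c : ℕ → E} (hc0 : c 0 = a) (hstep : ∀ i < n, Step p (c i) (c (i+1)))
    (hcost : chainCost p c n < θ) :
    ∀ i ≤ n, f₀ (p (c i)) = c i ∧
      dist (p a) (p (c i)) ≤ ∑ j ∈ Finset.range i, dist (p (c j)) (p (c (j+1))) := by
  have htpos : 0 < t := lt_of_lt_of_le hθ hθt
  have hpartial : ∀ i ≤ n,
      (∑ j ∈ Finset.range i, dist (p (c j)) (p (c (j+1)))) ≤ chainCost p c n := by
    intro i hi
    apply Finset.sum_le_sum_of_subset_of_nonneg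
    · exact Finset.range_subset_range.2 hi
    · intro j _ _; exact dist_nonneg
  intro i
  induction i with
  | zero =>
    intro _
    constructor
    · rw [hc0]; exact hfa
    · simp [hc0]
  | succ i ih =>
    intro hi1
    have hi : i ≤ n := by omega
    obtain ⟨hfi, hdi⟩ := ih hi
    obtain ⟨D, g, hSg, hziD, hzi1D, hgzi, hgzi1, hbD, hbD'⟩ := hstep i (by omega)
    set zi := p (c i) with hzi
    set zi1 := p (c (i+1)) with hzi1
    -- distance bookkeeping
    have hdtot : dist (p a) zi < θ :=
      lt_of_le_of_lt (le_trans hdi (hpartial i hi)) hcost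
    have hd1 : dist (p a) zi1 ≤ ∑ j ∈ Finset.range (i+1), dist (p (c j)) (p (c (j+1))) := by
      rw [Finset.sum_range_succ]
      calc dist (p a) zi1 ≤ dist (p a) zi + dist zi zi1 := dist_triangle _ _ _
        _ ≤ _ := add_le_add_left hdi _
    have hdtot1 : dist (p a) zi1 < θ := lt_of_le_of_lt (le_trans hd1 (hpartial (i+1) hi1)) hcost
    have hziball : zi ∈ ball (p a) θ := by rw [mem_ball, dist_comm]; exact hdtot
    have hzi1ball : zi1 ∈ ball (p a) θ := by rw [mem_ball, dist_comm]; exact hdtot1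
    have hziB : zi ∈ B := hθB hziball
    have hzi1B : zi1 ∈ B := hθB hzi1ball
    -- B is inside D and D₀
    have hBD : B ⊆ D := by
      intro w hw
      apply hbD
      have hwball : w ∈ ball (p a) t := hBsub hw
      rw [mem_ball] at hwball ⊢
      have h8 : 8 * t ≤ rad p zi := hr8 zi hziball
      calc dist w zi ≤ dist w (p a) + dist (p a) zi := dist_triangle _ _ _
        _ < t + θ := by rw [dist_comm (p a) zi] at hdtot ⊢; exact add_lt_add hwball hdtot
        _ ≤ 2 * t := by linarith
        _ ≤ rad p zi / 4 := by linarith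
    have hBD₀ : B ⊆ D₀ := by
      intro w hw
      apply hball
      have := hBsub hw
      exact ball_subset_ball (by linarith) this
    -- the connected image argument
    have hgB : ContinuousOn g B := hSg.1.mono hBD
    have hconn : IsPreconnected (g '' B) := hBc.image g hgB
    have hsub : g '' B ⊆ (f₀ '' D₀) ∪ ((p ⁻¹' D₀) \ (f₀ '' D₀)) := by
      rintro w ⟨z, hz, rfl⟩
      have : p (g z) = z := hSg.2.1 z (hBD hz)
      have hmem : g z ∈ p ⁻¹' D₀ := by rw [mem_preimage, this]; exact hBD₀ hz
      by_cases hcase : g z ∈ f₀ '' D₀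
      · exact Or.inl hcase
      · exact Or.inr ⟨hmem, hcase⟩
    have hdis : Disjoint (f₀ '' D₀) ((p ⁻¹' D₀) \ (f₀ '' D₀)) := disjoint_sdiff_right
    have hnon : ((g '' B) ∩ (f₀ '' D₀)).Nonempty := by
      refine ⟨c i, ⟨zi, hziB, hgzi⟩, ?_⟩
      exact ⟨zi, hBD₀ hziB, hfi⟩
    have hsubV : g '' B ⊆ f₀ '' D₀ :=
      IsPreconnected.subset_left_of_subset_union hS.2.2.1 hS.2.2.2 hdis hsub hnon hconn
    have hci1 : c (i+1) ∈ f₀ '' D₀ := hsubV ⟨zi1, hzi1B, hgzi1⟩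
    obtain ⟨w, hwD, hww⟩ := hci1
    have hpw : p (c (i+1)) = w := by rw [← hww, hS.2.1 w hwD]
    constructor
    · rw [hzi1, hpw]; exact hww
    · exact hd1

/-- positivity -/
lemma rho_pos (hp : IsCoveringMap p) [ConnectedSpace E] [LocallyConnectedSpace X]
    {a b : E} (hab : a ≠ b) : 0 < rho p a b := by
  rcases eq_or_ne (p a) (p b) with hpab | hpab
  swap
  · calc (0:ℝ) < dist (p a) (p b) := dist_pos.2 hpab
      _ ≤ rho p a b := dist_le_rho hp a b
  -- same fiber case
  set y := p a with hy
  set r0 := rad p y with hr0def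
  have hr0 : 0 < r0 := rad_pos hp y
  set t := r0 / 16 with htdef
  have ht : 0 < t := by positivity
  obtain ⟨D₀, hD₀, hball₀⟩ := exists_ec_ball hp (show 4 * t < rad p y by
    rw [← hr0def]; linarith)
  have hyD₀ : y ∈ D₀ := hball₀ (mem_ball_self (by linarith))
  obtain ⟨f₀, hS, hfa⟩ := hD₀.2 a hyD₀
  -- connected neighbourhood from local connectedness
  obtain ⟨B, hBsub, hBo, hBy, hBconn⟩ :=
    locallyConnectedSpace_iff_subsets_isOpen_isConnected.1 (by infer_instance) y
      (ball y t) (ball_mem_nhds y ht)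
  obtain ⟨θ₀, hθ₀, hθball⟩ := Metric.isOpen_iff.1 hBo y hBy
  set θ := min θ₀ t with hθdef
  have hθ : 0 < θ := lt_min hθ₀ ht
  have hθt : θ ≤ t := min_le_right _ _
  have hθB : ball y θ ⊆ B := fun w hw => hθball (ball_subset_ball (min_le_left _ _) hw)
  have hr8 : ∀ z ∈ ball y θ, 8 * t ≤ rad p z := by
    intro z hz
    have hlip := rad_lip hp y z
    rw [mem_ball, dist_comm] at hz
    have : dist y z < t := lt_of_lt_of_le hz hθt
    rw [← hr0def] at hlip
    have : r0 - t ≤ rad p z := by linarith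
    rw [htdef] at this ⊢
    linarith
  -- every chain from a to b costs at least θ
  have hLB : ∀ L ∈ CS p a b, θ ≤ L := by
    rintro L ⟨n, c, ⟨hc0, hcn, hcs⟩, rfl⟩
    by_contra hcon
    push_neg at hcon
    have := stay hS hfa hθ hθt hball₀ hBconn.isPreconnected hBsub hθB hr8 hc0 hcs hcon
      n (le_refl n)
    have hbeq : f₀ (p b) = b := by rw [← hcn]; exact (this).1
    rw [← hpab, hfa] at hbeq
    exact hab hbeq
  calc (0:ℝ) < θ := hθ
    _ ≤ rho p a b := le_csInf (cs_nonempty hp a b) hLB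

/-- open sets absorb small rho-balls -/
lemma rho_forward (hp : IsCoveringMap p) [ConnectedSpace E] [LocallyConnectedSpace X]
    {s : Set E} (hs : IsOpen s) {a : E} (ha : a ∈ s) :
    ∃ ε > 0, {b : E | rho p a b < ε} ⊆ s := by
  set y := p a with hy
  set r0 := rad p y with hr0def
  have hr0 : 0 < r0 := rad_pos hp y
  set t := r0 / 16 with htdef
  have ht : 0 < t := by positivity
  obtain ⟨D₀, hD₀, hball₀⟩ := exists_ec_ball hp (show 4 * t < rad p y by
    rw [← hr0def]; linarith)
  have hyD₀ : y ∈ D₀ := hball₀ (mem_ball_self (by linarith))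
  obtain ⟨f₀, hS, hfa⟩ := hD₀.2 a hyD₀
  obtain ⟨B, hBsub, hBo, hBy, hBconn⟩ :=
    locallyConnectedSpace_iff_subsets_isOpen_isConnected.1 (by infer_instance) y
      (ball y t) (ball_mem_nhds y ht)
  obtain ⟨θ₀, hθ₀, hθball⟩ := Metric.isOpen_iff.1 hBo y hBy
  set θ := min θ₀ t with hθdef
  have hθ : 0 < θ := lt_min hθ₀ ht
  have hθt : θ ≤ t := min_le_right _ _
  have hθB : ball y θ ⊆ B := fun w hw => hθball (ball_subset_ball (min_le_left _ _) hw)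
  have hr8 : ∀ z ∈ ball y θ, 8 * t ≤ rad p z := by
    intro z hz
    have hlip := rad_lip hp y z
    rw [mem_ball, dist_comm] at hz
    have : dist y z < t := lt_of_lt_of_le hz hθt
    rw [← hr0def] at hlip
    rw [htdef]
    linarith
  -- continuity of the section into s
  have hcw : ContinuousWithinAt f₀ D₀ y := hS.1 y hyD₀
  have hnhds : f₀ ⁻¹' s ∈ nhdsWithin y D₀ := hcw (hs.mem_nhds (by rw [hfa]; exact ha))
  rw [hD₀.1.nhdsWithin_eq hyD₀] at hnhds
  obtain ⟨γ, hγ, hγball⟩ := Metric.mem_nhds_iff.1 hnhds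
  refine ⟨min θ γ, lt_min hθ hγ, ?_⟩
  intro b hb
  rw [mem_setOf_eq] at hb
  obtain ⟨L, hL, hLlt⟩ := exists_lt_of_csInf_lt (cs_nonempty hp a b) hb
  obtain ⟨n, c, ⟨hc0, hcn, hcs⟩, rfl⟩ := hL
  have hcost : chainCost p c n < θ := lt_of_lt_of_le hLlt (min_le_left _ _)
  have hstay := stay hS hfa hθ hθt hball₀ hBconn.isPreconnected hBsub hθB hr8 hc0 hcs hcost
    n (le_refl n)
  have hbd : dist y (p b) < γ := by
    rw [hy, ← hcn]
    exact lt_of_le_of_lt hstay.2 (lt_of_lt_of_le hLlt (min_le_right _ _))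
  have hmem : p b ∈ ball y γ := by rw [mem_ball, dist_comm]; exact hbd
  have : f₀ (p b) ∈ s := hγball hmem
  rw [← hcn] at this ⊢
  rw [hstay.1] at this
  exact this

end StmtAux

/-- Any metric on the base of a covering map with connected total space and locally
connected base lifts to a metric on the total space making the projection a local
isometry. -/
theorem stmt3 {E X : Type*} [TopologicalSpace E] [MetricSpace X]
    [ConnectedSpace E] [LocallyConnectedSpace X]
    (p : E → X) (hcov : IsCoveringMap p) :
    ∃ ρ : E → E → ℝ,
      (∀ a b : E, 0 ≤ ρ a b) ∧
      (∀ a b : E, ρ a b = 0 ↔ a = b) ∧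
      (∀ a b : E, ρ a b = ρ b a) ∧
      (∀ a b c : E, ρ a c ≤ ρ a b + ρ b c) ∧
      (∀ s : Set E, IsOpen s ↔ ∀ a ∈ s, ∃ ε > 0, {b : E | ρ a b < ε} ⊆ s) ∧
      (∀ x : E, ∃ U : Set E, IsOpen U ∧ x ∈ U ∧
        ∀ a ∈ U, ∀ b ∈ U, dist (p a) (p b) = ρ a b) := by
  classical
  refine ⟨StmtAux.rho p, ?_, ?_, ?_, ?_, ?_, ?_⟩
  · exact fun a b => StmtAux.rho_nonneg hcov a b
  · intro a b
    constructor
    · intro h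
      by_contra hne
      exact (StmtAux.rho_pos hcov hne).ne' h
    · rintro rfl
      exact StmtAux.rho_self hcov a
  · exact fun a b => StmtAux.rho_symm hcov a b
  · exact fun a b c => StmtAux.rho_triangle hcov a b c
  · intro s
    constructor
    · intro hs a ha
      exact StmtAux.rho_forward hcov hs ha
    · intro h
      rw [isOpen_iff_forall_mem_open]
      intro a ha
      obtain ⟨ε, hε, hsub⟩ := h a ha
      obtain ⟨O, hO, haO, hstep⟩ := StmtAux.exists_good_nhd hcov a
      refine ⟨O ∩ p ⁻¹' (Metric.ball (p a) ε), ?_, ?_, ?_⟩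
      · rintro w ⟨hwO, hwb⟩
        apply hsub
        rw [Set.mem_setOf_eq]
        refine lt_of_le_of_lt (StmtAux.rho_le_of_step (hstep a haO w hwO)) ?_
        rwa [Set.mem_preimage, Metric.mem_ball, dist_comm] at hwb
      · exact hO.inter (Metric.isOpen_ball.preimage hcov.continuous)
      · exact ⟨haO, by simp [Metric.mem_ball, hε]⟩
  · intro x
    obtain ⟨O, hO, hxO, hstep⟩ := StmtAux.exists_good_nhd hcov x
    refine ⟨O, hO, hxO, ?_⟩
    intro a ha b hb
    exact le_antisymm (StmtAux.dist_le_rho hcov a b) (StmtAux.rho_le_of_step (hstep a ha b hb))
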